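/- If all pairwise greatest common divisors gcd(a_s, a_t) for 1 ≤ s < t ≤ k+1 are equal to one common value, then for all indices j, l with 1 ≤ j < l ≤ k, gcd(a_{j+1}, a_{l+1}) divides a_{j+2} − a_{l+2} (where a_{k+2} = 0); i.e., the system of congruences c ≡ a_{j+2} (mod a_{j+1}) for 1 ≤ j ≤ k satisfies the pairwise compatibility condition of the Chinese remainder theorem. -/
import Mathlib


/-- If all pairwise gcds of `a 1, …, a (k+1)` are equal to one common value, then for all
`1 ≤ j < l ≤ k`, `gcd (a (j+1)) (a (l+1))` divides `a (j+2) - a (l+2)`: the CRT pairwise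
compatibility condition for the congruences `c ≡ a (j+2) (mod a (j+1))`. -/
theorem crt_compatibility_of_pairwise_gcd_eq
    (a : ℕ → ℕ) (k : ℕ) (hk : 1 ≤ k)
    (hb : 1 ≤ a 2) (hab : a 2 < a 1)
    (hrec : ∀ i, 1 ≤ i → i ≤ k → a (i + 2) = a i % a (i + 1))
    (hpos : 0 < a (k + 1)) (hzero : a (k + 2) = 0)
    (hgcd : ∃ g : ℕ, ∀ s t, 1 ≤ s → s < t → t ≤ k + 1 → Nat.gcd (a s) (a t) = g) :
    ∀ j l, 1 ≤ j → j < l → l ≤ k →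
      (Nat.gcd (a (j + 1)) (a (l + 1)) : ℤ) ∣ ((a (j + 2) : ℤ) - (a (l + 2) : ℤ)) := by
  obtain ⟨g, hg⟩ := hgcd
  intro j l hj hjl hlk
  -- g divides a i for 1 ≤ i ≤ k+1, hence divides each remainder a (i+2) for 1 ≤ i ≤ k
  have hdvd : ∀ i, 1 ≤ i → i ≤ k → g ∣ a (i + 2) := by
    intro i hi hik
    have h1 : Nat.gcd (a i) (a (i + 1)) = g := hg i (i + 1) hi (Nat.lt_succ_self i)
      (Nat.succ_le_succ hik)
    have hgi : g ∣ a i := h1 ▸ Nat.gcd_dvd_left _ _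
    have hgi1 : g ∣ a (i + 1) := h1 ▸ Nat.gcd_dvd_right _ _
    rw [hrec i hi hik]
    exact (Nat.dvd_mod_iff hgi1).mpr hgi
  have hgcdeq : Nat.gcd (a (j + 1)) (a (l + 1)) = g :=
    hg (j + 1) (l + 1) (Nat.le_succ_of_le hj) (Nat.succ_lt_succ hjl)
      (Nat.succ_le_succ hlk)
  rw [hgcdeq]
  have h1 : (g : ℤ) ∣ (a (j + 2) : ℤ) :=
    Int.natCast_dvd_natCast.mpr (hdvd j hj (le_of_lt (lt_of_lt_of_le hjl hlk)))
  have h2 : (g : ℤ) ∣ (a (l + 2) : ℤ) :=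
    Int.natCast_dvd_natCast.mpr (hdvd l (le_of_lt (lt_of_le_of_lt hj hjl)) hlk)
  exact dvd_sub h1 h2
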